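/- arXiv:1602.05676 — 2 statements merged into one kernel-verified Lean document; each statement's English description precedes it below -/
import Mathlib

section
/- Fix a non-negative integer d. There exist a positive integer m, positive reals C_1,…,C_m, and reals t_1,…,t_m with 0 < t_l ≤ 1, such that for all ε > 0, all δ > 0, every polynomial p ∈ ℂ[x] of degree at most d whose maximal coefficient absolute value is at least δ, and every positive integer k, the Lebesgue measure of { x ∈ U_k : |p(x)| < ε } is bounded above by k^d · Σ_{l=1}^m C_l · (δ^{-1}ε)^{t_l}, where U_k = [-k/2, -(k-1)/2] ∪ [(k-1)/2, k/2]. -/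
set_option maxHeartbeats 1000000

open MeasureTheory ENNReal

section AuxLemmas
open Polynomial

lemma mprod_nonneg {α : Type*} (s : Multiset α) (f : α → ℝ) (h : ∀ i ∈ s, 0 ≤ f i) :
    0 ≤ (s.map f).prod := by
  induction s using Multiset.induction_on with
  | empty => simp
  | cons a s ih =>
    simp only [Multiset.map_cons, Multiset.prod_cons]
    exact mul_nonneg (h a (Multiset.mem_cons_self a s))
      (ih fun i hi => h i (Multiset.mem_cons_of_mem hi))

lemma mprod_pos {α : Type*} (s : Multiset α) (f : α → ℝ) (h : ∀ i ∈ s, 0 < f i) :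
    0 < (s.map f).prod := by
  induction s using Multiset.induction_on with
  | empty => simp
  | cons a s ih =>
    simp only [Multiset.map_cons, Multiset.prod_cons]
    exact mul_pos (h a (Multiset.mem_cons_self a s))
      (ih fun i hi => h i (Multiset.mem_cons_of_mem hi))

lemma mprod_le_mprod {α : Type*} (s : Multiset α) (f g : α → ℝ)
    (h0 : ∀ i ∈ s, 0 ≤ f i) (h : ∀ i ∈ s, f i ≤ g i) :
    (s.map f).prod ≤ (s.map g).prod := by
  induction s using Multiset.induction_on with
  | empty => simp
  | cons a s ih =>
    simp only [Multiset.map_cons, Multiset.prod_cons]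
    have h0' : ∀ i ∈ s, 0 ≤ f i := fun i hi => h0 i (Multiset.mem_cons_of_mem hi)
    exact mul_le_mul (h a (Multiset.mem_cons_self a s))
      (ih h0' fun i hi => h i (Multiset.mem_cons_of_mem hi))
      (mprod_nonneg s f h0')
      (le_trans (h0 a (Multiset.mem_cons_self a s)) (h a (Multiset.mem_cons_self a s)))

lemma pow_card_le_mprod {α : Type*} (s : Multiset α) (f : α → ℝ) (ρ : ℝ) (hρ : 0 ≤ ρ)
    (h : ∀ i ∈ s, ρ ≤ f i) : ρ ^ (Multiset.card s) ≤ (s.map f).prod := by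
  induction s using Multiset.induction_on with
  | empty => simp
  | cons a s ih =>
    simp only [Multiset.map_cons, Multiset.prod_cons, Multiset.card_cons, pow_succ]
    rw [mul_comm (ρ ^ Multiset.card s) ρ]
    exact mul_le_mul (h a (Multiset.mem_cons_self a s))
      (ih fun i hi => h i (Multiset.mem_cons_of_mem hi)) (pow_nonneg hρ _)
      (le_trans hρ (h a (Multiset.mem_cons_self a s)))

lemma mprod_const_mul {α : Type*} (s : Multiset α) (f : α → ℝ) (c : ℝ) :
    (s.map fun i => c * f i).prod = c ^ (Multiset.card s) * (s.map f).prod := by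
  induction s using Multiset.induction_on with
  | empty => simp
  | cons a s ih =>
    simp only [Multiset.map_cons, Multiset.prod_cons, Multiset.card_cons, pow_succ, ih]
    ring

lemma coeff_prod_bound (R : Multiset ℂ) (j : ℕ) :
    ‖((R.map fun r => X - C r).prod).coeff j‖ ≤ (R.map fun r => 1 + ‖r‖).prod := by
  induction R using Multiset.induction_on generalizing j with
  | empty => simp [Polynomial.coeff_one]; split <;> simp
  | cons a s ih =>
    simp only [Multiset.map_cons, Multiset.prod_cons]
    set q : Polynomial ℂ := (s.map fun r => X - C r).prod with hq
    set B : ℝ := (s.map fun r => 1 + ‖r‖).prod with hBdef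
    have hB : 0 ≤ B :=
      mprod_nonneg _ _ fun i _ => by positivity
    rw [sub_mul]
    have hc0 : ∀ j, ‖q.coeff j‖ ≤ B := ih
    cases j with
    | zero =>
      rw [Polynomial.coeff_sub, Polynomial.mul_coeff_zero, Polynomial.coeff_X_zero, zero_mul,
        zero_sub, norm_neg, Polynomial.mul_coeff_zero, Polynomial.coeff_C_zero]
      rw [norm_mul]
      have := hc0 0
      nlinarith [norm_nonneg a, norm_nonneg (q.coeff 0)]
    | succ j =>
      rw [Polynomial.coeff_sub, Polynomial.coeff_X_mul, Polynomial.coeff_C_mul]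
      have h1 : ‖q.coeff j - a * q.coeff (j+1)‖ ≤ ‖q.coeff j‖ + ‖a‖ * ‖q.coeff (j+1)‖ := by
        refine (norm_sub_le _ _).trans ?_
        rw [norm_mul]
      have h2 := hc0 j
      have h3 := hc0 (j+1)
      nlinarith [norm_nonneg a, norm_nonneg (q.coeff j), norm_nonneg (q.coeff (j+1))]

lemma mnorm_prod (s : Multiset ℂ) : ‖s.prod‖ = (s.map norm).prod := by
  induction s using Multiset.induction_on with
  | empty => simp
  | cons a s ih => simp [norm_mul, ih]

lemma mprod_const {α : Type*} (s : Multiset α) (c : ℝ) :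
    (s.map fun _ => c).prod = c ^ (Multiset.card s) := by
  rw [Multiset.map_const', Multiset.prod_replicate]

end AuxLemmas

/-- The closed subset `U_k = [-k/2, -(k-1)/2] ∪ [(k-1)/2, k/2]` of `ℝ`. -/
def Uset (k : ℕ) : Set ℝ :=
  Set.Icc (-(k : ℝ) / 2) (-((k : ℝ) - 1) / 2) ∪ Set.Icc (((k : ℝ) - 1) / 2) ((k : ℝ) / 2)

lemma Uset_abs {k : ℕ} (hk : 0 < k) {x : ℝ} (hx : x ∈ Uset k) : |x| ≤ (k : ℝ) / 2 := by
  have hk1 : (1:ℝ) ≤ k := by exact_mod_cast hk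
  rcases hx with ⟨h1, h2⟩ | ⟨h1, h2⟩ <;> rw [abs_le] <;> constructor <;> linarith

lemma Uset_volume {k : ℕ} : volume (Uset k) ≤ ENNReal.ofReal 1 := by
  refine (measure_union_le _ _).trans ?_
  rw [Real.volume_Icc, Real.volume_Icc,
    ← ENNReal.ofReal_add (by linarith [(by positivity : (0:ℝ) ≤ 1/2)])
      (by linarith [(by positivity : (0:ℝ) ≤ 1/2)])]
  apply ENNReal.ofReal_le_ofReal
  ring_nf
  norm_num

/-- Fix `d ≥ 0`.  There exist `m ≥ 1`, positive constants `C_1,…,C_m` and exponents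
`0 < t_l ≤ 1` such that for all `ε, δ > 0`, every `p ∈ ℂ[x]` of degree `≤ d` with some
coefficient of absolute value `≥ δ`, and every `k ≥ 1`, the Lebesgue measure of
`{x ∈ U_k : |p(x)| < ε}` is at most `k^d · Σ_l C_l · (δ⁻¹ε)^{t_l}`. -/
theorem statement1 (d : ℕ) :
    ∃ (m : ℕ) (C t : Fin m → ℝ), 0 < m ∧ (∀ l, 0 < C l) ∧ (∀ l, 0 < t l ∧ t l ≤ 1) ∧
      ∀ (ε δ : ℝ), 0 < ε → 0 < δ →
        ∀ p : Polynomial ℂ, p.natDegree ≤ d → (∃ i, δ ≤ ‖p.coeff i‖) →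
          ∀ k : ℕ, 0 < k →
            volume {x : ℝ | x ∈ Uset k ∧ ‖p.eval (x : ℂ)‖ < ε} ≤
              ENNReal.ofReal ((k : ℝ) ^ d * ∑ l, C l * (δ⁻¹ * ε) ^ (t l)) := by
  classical
  refine ⟨d + 1, fun _ => (2 * d + 1) * 4 ^ d, fun l => 1 / ((l : ℕ) + 1), Nat.succ_pos d,
    fun l => by positivity, fun l => ⟨by positivity, ?_⟩, ?_⟩
  · rw [div_le_one (by positivity)]
    have : (0:ℝ) ≤ (l : ℕ) := Nat.cast_nonneg _
    linarith
  intro ε δ hε hδ p hdeg hcoeff k hk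
  obtain ⟨i, hi⟩ := hcoeff
  have hk1 : (1:ℝ) ≤ (k : ℝ) := by exact_mod_cast hk
  have hp0 : p ≠ 0 := by
    rintro rfl
    simp only [Polynomial.coeff_zero, norm_zero] at hi
    linarith
  set a : ℂ := p.leadingCoeff with ha_def
  have ha : a ≠ 0 := Polynomial.leadingCoeff_ne_zero.mpr hp0
  have hanorm : 0 < ‖a‖ := norm_pos_iff.mpr ha
  have hsplits : p.Splits := IsAlgClosed.splits p
  set R : Multiset ℂ := p.roots with hR_def
  have hfact : p = Polynomial.C a * (R.map fun r => Polynomial.X - Polynomial.C r).prod :=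
    hsplits.eq_prod_roots
  have hcard : Multiset.card R = p.natDegree := Polynomial.splits_iff_card_roots.mp hsplits
  set S : Multiset ℂ := R.filter (fun r => ‖r‖ < (k : ℝ)) with hS_def
  set F : Multiset ℂ := R.filter (fun r => ¬ ‖r‖ < (k : ℝ)) with hF_def
  have hSF : S + F = R := Multiset.filter_add_not _ _
  set s : ℕ := Multiset.card S with hs_def
  set f : ℕ := Multiset.card F with hf_def
  have hsfd : s + f ≤ d := by
    have h1 : s + f = Multiset.card R := by rw [hs_def, hf_def, ← Multiset.card_add, hSF]
    rw [h1, hcard]; exact hdeg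
  have hsd : s ≤ d := by omega
  have hFmem : ∀ r ∈ F, (k : ℝ) ≤ ‖r‖ := by
    intro r hr
    exact not_lt.mp (Multiset.mem_filter.mp hr).2
  have hSmem : ∀ r ∈ S, ‖r‖ < (k : ℝ) := fun r hr => (Multiset.mem_filter.mp hr).2
  set A : ℝ := ‖a‖ * (F.map fun r => ‖r‖ / 2).prod with hA_def
  have hFprod_pos : 0 < (F.map fun r => ‖r‖ / 2).prod :=
    mprod_pos _ _ fun r hr => by have := hFmem r hr; linarith
  have hApos : 0 < A := mul_pos hanorm hFprod_pos
  have hsplit : ∀ g : ℂ → ℝ, (R.map g).prod = (S.map g).prod * (F.map g).prod := by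
    intro g
    rw [← hSF, Multiset.map_add, Multiset.prod_add]
  have heval : ∀ x : ℂ, ‖p.eval x‖ = ‖a‖ * (R.map fun r => ‖x - r‖).prod := by
    intro x
    conv_lhs => rw [hfact]
    rw [Polynomial.eval_mul, Polynomial.eval_C, norm_mul, Polynomial.eval_multiset_prod,
      Multiset.map_map, mnorm_prod, Multiset.map_map]
    refine congrArg _ (congrArg _ (Multiset.map_congr rfl fun r _ => ?_))
    simp
  have hlow : ∀ x : ℝ, x ∈ Uset k →
      A * (S.map fun r => ‖(x : ℂ) - r‖).prod ≤ ‖p.eval (x : ℂ)‖ := by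
    intro x hx
    have hxabs : ‖(x : ℂ)‖ ≤ (k : ℝ) / 2 := by
      rw [Complex.norm_real, Real.norm_eq_abs]
      exact Uset_abs hk hx
    rw [heval, hsplit]
    have hFle : (F.map fun r => ‖r‖ / 2).prod ≤ (F.map fun r => ‖(x : ℂ) - r‖).prod := by
      refine mprod_le_mprod _ _ _ (fun r hr => by have := hFmem r hr; linarith) ?_
      intro r hr
      have h1 : ‖r‖ - ‖(x : ℂ)‖ ≤ ‖(x : ℂ) - r‖ := by
        rw [norm_sub_rev]; exact norm_sub_norm_le r (x : ℂ)
      have := hFmem r hr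
      linarith
    have hSnn : 0 ≤ (S.map fun r => ‖(x : ℂ) - r‖).prod :=
      mprod_nonneg _ _ fun r _ => norm_nonneg _
    calc A * (S.map fun r => ‖(x : ℂ) - r‖).prod
        = ‖a‖ * ((F.map fun r => ‖r‖ / 2).prod * (S.map fun r => ‖(x : ℂ) - r‖).prod) := by
          rw [hA_def]; ring
      _ ≤ ‖a‖ * ((F.map fun r => ‖(x : ℂ) - r‖).prod * (S.map fun r => ‖(x : ℂ) - r‖).prod) :=
          mul_le_mul_of_nonneg_left (mul_le_mul_of_nonneg_right hFle hSnn) (norm_nonneg a)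
      _ = ‖a‖ * ((S.map fun r => ‖(x : ℂ) - r‖).prod * (F.map fun r => ‖(x : ℂ) - r‖).prod) := by
          ring
  have hδA : δ ≤ 4 ^ d * (k : ℝ) ^ d * A := by
    have h1 : ‖p.coeff i‖ ≤ ‖a‖ * (R.map fun r => 1 + ‖r‖).prod := by
      conv_lhs => rw [hfact]
      rw [Polynomial.coeff_C_mul, norm_mul]
      exact mul_le_mul_of_nonneg_left (coeff_prod_bound R i) (norm_nonneg a)
    have hSle : (S.map fun r => 1 + ‖r‖).prod ≤ (2 * (k : ℝ)) ^ s := by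
      rw [hs_def, ← mprod_const S (2 * (k : ℝ))]
      refine mprod_le_mprod _ _ _ (fun r _ => by positivity) ?_
      intro r hr
      have := hSmem r hr
      linarith
    have hFle : (F.map fun r => 1 + ‖r‖).prod ≤ 4 ^ f * (F.map fun r => ‖r‖ / 2).prod := by
      rw [hf_def, ← mprod_const_mul]
      refine mprod_le_mprod _ _ _ (fun r _ => by positivity) ?_
      intro r hr
      have := hFmem r hr
      have h2 : 4 * (‖r‖ / 2) = 2 * ‖r‖ := by ring
      rw [h2]
      linarith
    have h2 : (R.map fun r => 1 + ‖r‖).prod ≤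
        (2 * (k : ℝ)) ^ s * (4 ^ f * (F.map fun r => ‖r‖ / 2).prod) := by
      rw [hsplit]
      have hFnn : 0 ≤ (F.map fun r => 1 + ‖r‖).prod := mprod_nonneg _ _ fun r _ => by positivity
      exact mul_le_mul hSle hFle hFnn (by positivity)
    have h3 : (2 * (k : ℝ)) ^ s * 4 ^ f ≤ 4 ^ d * (k : ℝ) ^ d := by
      have e1 : (2 * (k : ℝ)) ^ s * 4 ^ f = 2 ^ s * 4 ^ f * (k : ℝ) ^ s := by
        rw [mul_pow]; ring
      rw [e1]
      have e2 : (2:ℝ) ^ s * 4 ^ f ≤ 4 ^ d := by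
        calc (2:ℝ) ^ s * 4 ^ f ≤ 4 ^ s * 4 ^ f :=
              mul_le_mul_of_nonneg_right (pow_le_pow_left₀ (by norm_num) (by norm_num) s)
                (by positivity)
          _ = 4 ^ (s + f) := by rw [pow_add]
          _ ≤ 4 ^ d := pow_le_pow_right₀ (by norm_num) hsfd
      have e3 : (k : ℝ) ^ s ≤ (k : ℝ) ^ d := pow_le_pow_right₀ hk1 hsd
      calc (2:ℝ) ^ s * 4 ^ f * (k : ℝ) ^ s ≤ 4 ^ d * (k : ℝ) ^ s :=
            mul_le_mul_of_nonneg_right e2 (by positivity)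
        _ ≤ 4 ^ d * (k : ℝ) ^ d := mul_le_mul_of_nonneg_left e3 (by positivity)
    calc δ ≤ ‖p.coeff i‖ := hi
      _ ≤ ‖a‖ * (R.map fun r => 1 + ‖r‖).prod := h1
      _ ≤ ‖a‖ * ((2 * (k : ℝ)) ^ s * (4 ^ f * (F.map fun r => ‖r‖ / 2).prod)) :=
          mul_le_mul_of_nonneg_left h2 (norm_nonneg a)
      _ = (2 * (k : ℝ)) ^ s * 4 ^ f * A := by rw [hA_def]; ring
      _ ≤ 4 ^ d * (k : ℝ) ^ d * A := mul_le_mul_of_nonneg_right h3 (le_of_lt hApos)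
  have hδε : (0:ℝ) < δ⁻¹ * ε := by positivity
  have hsum_nn : ∀ l : Fin (d + 1),
      (0:ℝ) ≤ (2 * (d:ℝ) + 1) * 4 ^ d * (δ⁻¹ * ε) ^ ((1:ℝ) / ((l : ℕ) + 1)) := by
    intro l
    positivity
  have hterm : ∀ j : Fin (d + 1),
      (2 * (d:ℝ) + 1) * 4 ^ d * (δ⁻¹ * ε) ^ ((1:ℝ) / ((j : ℕ) + 1)) ≤
        ∑ l : Fin (d + 1), (2 * (d:ℝ) + 1) * 4 ^ d * (δ⁻¹ * ε) ^ ((1:ℝ) / ((l : ℕ) + 1)) :=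
    fun j => Finset.single_le_sum (fun l _ => hsum_nn l) (Finset.mem_univ j)
  have hkd1 : (1:ℝ) ≤ (k : ℝ) ^ d := one_le_pow₀ hk1
  by_cases hs0 : s = 0
  · -- no near roots: |p| ≥ A on U_k
    have hSzero : S = 0 := Multiset.card_eq_zero.mp hs0
    have hAle : ∀ x : ℝ, x ∈ Uset k → A ≤ ‖p.eval (x : ℂ)‖ := by
      intro x hx
      have h := hlow x hx
      rwa [hSzero, Multiset.map_zero, Multiset.prod_zero, mul_one] at h
    by_cases hεA : ε ≤ A
    · have hempty : {x : ℝ | x ∈ Uset k ∧ ‖p.eval (x : ℂ)‖ < ε} = ∅ := by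
        ext x
        simp only [Set.mem_setOf_eq, Set.mem_empty_iff_false, iff_false, not_and, not_lt]
        intro hx
        exact le_trans hεA (hAle x hx)
      rw [hempty, measure_empty]
      exact bot_le
    · push_neg at hεA
      have h2 : δ ≤ 4 ^ d * (k : ℝ) ^ d * ε :=
        hδA.trans (mul_le_mul_of_nonneg_left hεA.le (by positivity))
      have h1 : (1:ℝ) ≤ 4 ^ d * (k : ℝ) ^ d * (δ⁻¹ * ε) := by
        calc (1:ℝ) = δ⁻¹ * δ := (inv_mul_cancel₀ (ne_of_gt hδ)).symm
          _ ≤ δ⁻¹ * (4 ^ d * (k : ℝ) ^ d * ε) :=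
              mul_le_mul_of_nonneg_left h2 (by positivity)
          _ = 4 ^ d * (k : ℝ) ^ d * (δ⁻¹ * ε) := by ring
      refine le_trans (le_trans (measure_mono fun x hx => hx.1) Uset_volume) ?_
      apply ENNReal.ofReal_le_ofReal
      have h0 : (2 * (d:ℝ) + 1) * 4 ^ d * (δ⁻¹ * ε) ^ ((1:ℝ) / ((0:ℕ) + 1)) ≤
          ∑ l : Fin (d + 1), (2 * (d:ℝ) + 1) * 4 ^ d * (δ⁻¹ * ε) ^ ((1:ℝ) / ((l : ℕ) + 1)) := by
        have := hterm ⟨0, Nat.succ_pos d⟩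
        simpa using this
      have h4 : (δ⁻¹ * ε) ^ ((1:ℝ) / ((0:ℕ) + 1)) = δ⁻¹ * ε := by
        norm_num
      rw [h4] at h0
      have h5 : (1:ℝ) ≤ (k : ℝ) ^ d * ((2 * (d:ℝ) + 1) * 4 ^ d * (δ⁻¹ * ε)) := by
        have h6 : 4 ^ d * (k : ℝ) ^ d * (δ⁻¹ * ε) ≤
            (k : ℝ) ^ d * ((2 * (d:ℝ) + 1) * 4 ^ d * (δ⁻¹ * ε)) := by
          have h7 : (4:ℝ) ^ d ≤ (2 * (d:ℝ) + 1) * 4 ^ d := by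
            nlinarith [Nat.cast_nonneg (α := ℝ) d, (by positivity : (0:ℝ) < (4:ℝ) ^ d)]
          calc 4 ^ d * (k : ℝ) ^ d * (δ⁻¹ * ε) = (k:ℝ)^d * (4 ^ d * (δ⁻¹ * ε)) := by ring
            _ ≤ (k:ℝ)^d * ((2 * (d:ℝ) + 1) * 4 ^ d * (δ⁻¹ * ε)) := by
                apply mul_le_mul_of_nonneg_left _ (by positivity)
                exact mul_le_mul_of_nonneg_right h7 hδε.le
        linarith
      calc (1:ℝ) ≤ (k : ℝ) ^ d * ((2 * (d:ℝ) + 1) * 4 ^ d * (δ⁻¹ * ε)) := h5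
        _ ≤ (k : ℝ) ^ d * ∑ l : Fin (d + 1),
              (2 * (d:ℝ) + 1) * 4 ^ d * (δ⁻¹ * ε) ^ ((1:ℝ) / ((l : ℕ) + 1)) :=
            mul_le_mul_of_nonneg_left h0 (by positivity)
  · -- there is at least one near root
    have hs1 : 1 ≤ s := Nat.one_le_iff_ne_zero.mpr hs0
    have hεA' : 0 < ε / A := div_pos hε hApos
    set ρ : ℝ := (ε / A) ^ ((1:ℝ) / (s:ℝ)) with hρ_def
    have hρpos : 0 < ρ := Real.rpow_pos_of_pos hεA' _
    have hρs : ρ ^ s = ε / A := by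
      rw [hρ_def, ← Real.rpow_natCast ((ε / A) ^ ((1:ℝ) / (s:ℝ))) s,
        ← Real.rpow_mul (le_of_lt hεA'), one_div,
        inv_mul_cancel₀ (by exact_mod_cast hs0 : (s:ℝ) ≠ 0), Real.rpow_one]
    have hcover : {x : ℝ | x ∈ Uset k ∧ ‖p.eval (x : ℂ)‖ < ε} ⊆
        ⋃ r ∈ S.toFinset, Set.Icc (r.re - ρ) (r.re + ρ) := by
      rintro x ⟨hxU, hxe⟩
      have hPS : (S.map fun r => ‖(x : ℂ) - r‖).prod < ε / A := by
        have h := lt_of_le_of_lt (hlow x hxU) hxe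
        rwa [mul_comm, ← lt_div_iff₀ hApos] at h
      by_contra hnot
      simp only [Set.mem_iUnion, Set.mem_Icc, not_exists, not_and] at hnot
      have hall : ∀ r ∈ S, ρ ≤ ‖(x : ℂ) - r‖ := by
        intro r hr
        by_contra hlt
        push_neg at hlt
        have hre : |x - r.re| < ρ := by
          refine lt_of_le_of_lt ?_ hlt
          have h := Complex.abs_re_le_norm ((x : ℂ) - r)
          simpa using h
        rw [abs_lt] at hre
        exact hnot r (Multiset.mem_toFinset.mpr hr) (by linarith) (by linarith)
      have h1 := pow_card_le_mprod S (fun r => ‖(x : ℂ) - r‖) ρ hρpos.le hall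
      rw [← hs_def, hρs] at h1
      linarith
    have hcard_le : S.toFinset.card ≤ d := le_trans (Multiset.toFinset_card_le S) (hs_def ▸ hsd)
    have hmeas : volume {x : ℝ | x ∈ Uset k ∧ ‖p.eval (x : ℂ)‖ < ε} ≤
        ENNReal.ofReal ((d : ℝ) * (2 * ρ)) := by
      calc volume {x : ℝ | x ∈ Uset k ∧ ‖p.eval (x : ℂ)‖ < ε}
          ≤ volume (⋃ r ∈ S.toFinset, Set.Icc (r.re - ρ) (r.re + ρ)) := measure_mono hcover
        _ ≤ ∑ r ∈ S.toFinset, volume (Set.Icc (r.re - ρ) (r.re + ρ)) :=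
            measure_biUnion_finset_le _ _
        _ = ∑ _r ∈ S.toFinset, ENNReal.ofReal (2 * ρ) := by
            refine Finset.sum_congr rfl fun r _ => ?_
            rw [Real.volume_Icc]
            congr 1
            ring
        _ = (S.toFinset.card : ℝ≥0∞) * ENNReal.ofReal (2 * ρ) := by
            rw [Finset.sum_const, nsmul_eq_mul]
        _ ≤ (d : ℝ≥0∞) * ENNReal.ofReal (2 * ρ) := by
            exact mul_le_mul_left (by exact_mod_cast hcard_le) _
        _ = ENNReal.ofReal ((d : ℝ) * (2 * ρ)) := by
            rw [ENNReal.ofReal_mul (by positivity : (0:ℝ) ≤ (d:ℝ)), ENNReal.ofReal_natCast]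
    refine hmeas.trans (ENNReal.ofReal_le_ofReal ?_)
    -- real comparison
    have h41 : (1:ℝ) ≤ 4 ^ d * (k : ℝ) ^ d := by
      have h4 : (1:ℝ) ≤ 4 ^ d := one_le_pow₀ (by norm_num)
      nlinarith
    have hρle : ρ ≤ 4 ^ d * (k : ℝ) ^ d * (δ⁻¹ * ε) ^ ((1:ℝ) / (s:ℝ)) := by
      have h1 : ε / A ≤ 4 ^ d * (k : ℝ) ^ d * (δ⁻¹ * ε) := by
        rw [div_le_iff₀ hApos]
        have h2 : δ * (δ⁻¹ * ε) ≤ (4 ^ d * (k : ℝ) ^ d * A) * (δ⁻¹ * ε) :=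
          mul_le_mul_of_nonneg_right hδA hδε.le
        have h3 : δ * (δ⁻¹ * ε) = ε := by
          field_simp
        rw [h3] at h2
        calc ε ≤ (4 ^ d * (k : ℝ) ^ d * A) * (δ⁻¹ * ε) := h2
          _ = 4 ^ d * (k : ℝ) ^ d * (δ⁻¹ * ε) * A := by ring
      have hs1' : (1:ℝ) ≤ (s : ℝ) := by exact_mod_cast hs1
      calc ρ ≤ (4 ^ d * (k : ℝ) ^ d * (δ⁻¹ * ε)) ^ ((1:ℝ) / (s:ℝ)) :=
            Real.rpow_le_rpow hεA'.le h1 (by positivity)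
        _ = (4 ^ d * (k : ℝ) ^ d) ^ ((1:ℝ) / (s:ℝ)) * (δ⁻¹ * ε) ^ ((1:ℝ) / (s:ℝ)) :=
            Real.mul_rpow (by positivity) hδε.le
        _ ≤ 4 ^ d * (k : ℝ) ^ d * (δ⁻¹ * ε) ^ ((1:ℝ) / (s:ℝ)) := by
            refine mul_le_mul_of_nonneg_right ?_ (Real.rpow_nonneg hδε.le _)
            calc (4 ^ d * (k : ℝ) ^ d) ^ ((1:ℝ) / (s:ℝ))
                ≤ (4 ^ d * (k : ℝ) ^ d) ^ (1:ℝ) := by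
                  refine Real.rpow_le_rpow_of_exponent_le h41 ?_
                  rw [div_le_one (by linarith)]
                  exact hs1'
              _ = 4 ^ d * (k : ℝ) ^ d := Real.rpow_one _
    set j : Fin (d + 1) := ⟨s - 1, by omega⟩ with hj_def
    have hj : ((j : ℕ) : ℝ) + 1 = (s : ℝ) := by
      have h1 : (j : ℕ) = s - 1 := rfl
      rw [h1]
      have : ((s - 1 : ℕ) : ℝ) = (s : ℝ) - 1 := by
        push_cast [Nat.cast_sub hs1]
        ring
      rw [this]
      ring
    have hterm' : (2 * (d:ℝ) + 1) * 4 ^ d * (δ⁻¹ * ε) ^ ((1:ℝ) / (s:ℝ)) ≤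
        ∑ l : Fin (d + 1), (2 * (d:ℝ) + 1) * 4 ^ d * (δ⁻¹ * ε) ^ ((1:ℝ) / ((l : ℕ) + 1)) := by
      have := hterm j
      rwa [hj] at this
    have hd1 : (1:ℝ) ≤ (d:ℝ) := by
      have : 1 ≤ d := le_trans hs1 hsd
      exact_mod_cast this
    set B : ℝ := (δ⁻¹ * ε) ^ ((1:ℝ) / (s:ℝ)) with hB_def
    have hBnn : 0 ≤ B := Real.rpow_nonneg hδε.le _
    calc (d:ℝ) * (2 * ρ) ≤ (d:ℝ) * (2 * (4 ^ d * (k : ℝ) ^ d * B)) := by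
          refine mul_le_mul_of_nonneg_left ?_ (by positivity)
          exact mul_le_mul_of_nonneg_left hρle (by norm_num)
      _ = (k : ℝ) ^ d * ((2 * (d:ℝ)) * 4 ^ d * B) := by ring
      _ ≤ (k : ℝ) ^ d * ((2 * (d:ℝ) + 1) * 4 ^ d * B) := by
          refine mul_le_mul_of_nonneg_left ?_ (by positivity)
          have : (2 * (d:ℝ)) * 4 ^ d ≤ (2 * (d:ℝ) + 1) * 4 ^ d := by
            nlinarith [(by positivity : (0:ℝ) < (4:ℝ) ^ d)]
          exact mul_le_mul_of_nonneg_right this hBnn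
      _ ≤ (k : ℝ) ^ d * ∑ l : Fin (d + 1),
            (2 * (d:ℝ) + 1) * 4 ^ d * (δ⁻¹ * ε) ^ ((1:ℝ) / ((l : ℕ) + 1)) :=
          mul_le_mul_of_nonneg_left hterm' (by positivity)
end

section
/- Every element of the principal congruence subgroup Γ_n(N) of Sp(n,ℤ) with N > 2 is neat: if a is an eigenvalue of γ ∈ Γ_n(N) (viewing γ as a complex matrix) and a is a root of unity, then a = 1. In particular, if some power γ^l of γ ∈ Γ_n(N) is unipotent, then γ itself is unipotent. -/
open Matrix Polynomial

private lemma charpoly_eval_eq {m : Type*} [Fintype m] [DecidableEq m] (M : Matrix m m ℂ) (a : ℂ) :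
    M.charpoly.eval a = (a • (1 : Matrix m m ℂ) - M).det := by
  rw [Matrix.charpoly, eval_det, matPolyEquiv_charmatrix]
  congr 1
  ext i j
  simp [Matrix.scalar, Matrix.smul_apply, Matrix.one_apply, Matrix.diagonal_apply]

private lemma multiset_prod_le (s : Multiset ℝ) (c : ℝ) (hc : 0 ≤ c)
    (h0 : ∀ x ∈ s, 0 ≤ x) (h : ∀ x ∈ s, x ≤ c) :
    s.prod ≤ c ^ Multiset.card s := by
  induction s using Multiset.induction with
  | empty => simp
  | cons a s ih =>
    simp only [Multiset.prod_cons, Multiset.card_cons, pow_succ']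
    exact mul_le_mul (h a (Multiset.mem_cons_self a s))
      (ih (fun x hx => h0 x (Multiset.mem_cons_of_mem hx))
        (fun x hx => h x (Multiset.mem_cons_of_mem hx)))
      (Multiset.prod_nonneg (fun x hx => h0 x (Multiset.mem_cons_of_mem hx))) hc

private lemma key_neat (N k : ℕ) (hN : 2 < N) (hk : 0 < k) (β : ℂ) (hint : IsIntegral ℤ β)
    (hpow : ((N : ℂ) * β + 1) ^ k = 1) : β = 0 := by
  by_contra hβ
  have hNR : (2 : ℝ) < N := by exact_mod_cast hN
  have hNpos : (0 : ℝ) < N := by linarith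
  set p : ℤ[X] := minpoly ℤ β with hp
  have hpmonic : p.Monic := minpoly.monic hint
  have hdegpos : 0 < p.natDegree := minpoly.natDegree_pos hint
  set g : ℤ[X] := ((X : ℤ[X]) ^ k - 1).comp (C (N : ℤ) * X + 1) with hg
  have hgval : Polynomial.aeval β g = 0 := by
    rw [hg, aeval_comp]
    simp [hpow]
  have hgdvd : p ∣ g := minpoly.isIntegrallyClosed_dvd hint hgval
  set q : ℂ[X] := p.map (Int.castRingHom ℂ) with hq
  have hqmonic : q.Monic := hpmonic.map _
  have hqsplits : q.Splits := IsAlgClosed.splits q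
  have hcard : Multiset.card q.roots = q.natDegree :=
    (Polynomial.splits_iff_card_roots).mp hqsplits
  have hqdeg : q.natDegree = p.natDegree := hpmonic.natDegree_map _
  -- every root of q has absolute value at most 2/N
  have hroot_bound : ∀ μ ∈ q.roots, ‖μ‖ ≤ 2 / N := by
    intro μ hμ
    have hμ0 : Polynomial.aeval μ p = 0 := by
      have := Polynomial.isRoot_of_mem_roots hμ
      rw [hq, IsRoot, eval_map] at this
      rw [aeval_def]
      exact this
    have hgμ : Polynomial.aeval μ g = 0 := by
      obtain ⟨h, hgh⟩ := hgdvd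
      rw [hgh, _root_.map_mul, hμ0, zero_mul]
    have hμpow : ((N : ℂ) * μ + 1) ^ k = 1 := by
      rw [hg, aeval_comp] at hgμ
      have h1 : Polynomial.aeval μ (C (N : ℤ) * X + 1) = (N : ℂ) * μ + 1 := by
        simp
      rw [h1] at hgμ
      simp only [map_sub, map_pow, aeval_X, _root_.map_one, sub_eq_zero] at hgμ
      exact hgμ
    have habs : ‖(N : ℂ) * μ + 1‖ = 1 := by
      have h2 : (‖(N : ℂ) * μ + 1‖) ^ k = 1 := by
        rw [← norm_pow, hμpow, norm_one]
      rcases lt_trichotomy (‖(N : ℂ) * μ + 1‖) 1 with h | h | h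
      · exfalso
        have := pow_lt_one₀ (norm_nonneg _) h hk.ne'
        rw [h2] at this; exact lt_irrefl _ this
      · exact h
      · exfalso
        have := one_lt_pow₀ h hk.ne'
        rw [h2] at this; exact lt_irrefl _ this
    have h3 : (N : ℝ) * ‖μ‖ ≤ 2 := by
      have : ‖(N : ℂ) * μ‖ = ‖((N : ℂ) * μ + 1) + (-1)‖ := by
        ring_nf
      calc (N : ℝ) * ‖μ‖ = ‖(N : ℂ) * μ‖ := by
            rw [norm_mul, Complex.norm_natCast]
        _ = ‖((N : ℂ) * μ + 1) + (-1)‖ := this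
        _ ≤ ‖(N : ℂ) * μ + 1‖ + ‖(-1 : ℂ)‖ := norm_add_le _ _
        _ = 2 := by rw [habs]; norm_num
    rw [le_div_iff₀ hNpos, mul_comm]
    exact h3
  -- constant coefficient bound
  have hc0 : q.coeff 0 = (-1) ^ q.natDegree * q.roots.prod :=
    hqsplits.coeff_zero_eq_prod_roots_of_monic hqmonic
  have habs0 : ‖q.coeff 0‖ < 1 := by
    rw [hc0, norm_mul, norm_pow, norm_neg, norm_one, one_pow, one_mul]
    have hprodmap : ‖q.roots.prod‖ = (q.roots.map (fun z : ℂ => ‖z‖)).prod :=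
      map_multiset_prod (normHom : ℂ →*₀ ℝ) _
    rw [hprodmap]
    have hble := multiset_prod_le (q.roots.map (fun z : ℂ => ‖z‖)) (2 / N)
      (by positivity)
      (by intro x hx; obtain ⟨μ, _, rfl⟩ := Multiset.mem_map.mp hx; exact norm_nonneg _)
      (by intro x hx; obtain ⟨μ, hμ, rfl⟩ := Multiset.mem_map.mp hx; exact hroot_bound μ hμ)
    rw [Multiset.card_map, hcard] at hble
    calc (q.roots.map (fun z : ℂ => ‖z‖)).prod ≤ (2 / N) ^ q.natDegree := hble
      _ < 1 := by
        apply pow_lt_one₀ (by positivity) _ (by omega)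
        rw [div_lt_one hNpos]; exact hNR
  have hcoeff : p.coeff 0 = 0 := by
    have : q.coeff 0 = ((p.coeff 0 : ℤ) : ℂ) := by rw [hq, Polynomial.coeff_map]; rfl
    rw [this, Complex.norm_intCast] at habs0
    have : |(p.coeff 0 : ℝ)| = ((|p.coeff 0| : ℤ) : ℝ) := by push_cast; ring
    rw [this] at habs0
    have h4 : |p.coeff 0| < 1 := by exact_mod_cast habs0
    exact Int.abs_lt_one_iff.mp h4
  -- so X divides the minimal polynomial, contradiction with β ≠ 0
  obtain ⟨h, hph⟩ := Polynomial.X_dvd_iff.mpr hcoeff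
  have hhmonic : h.Monic := monic_X.of_mul_monic_left (hph ▸ hpmonic)
  have hne : h ≠ 0 := hhmonic.ne_zero
  have haevalh : Polynomial.aeval β h = 0 := by
    have := minpoly.aeval ℤ β
    rw [← hp, hph, _root_.map_mul, aeval_X] at this
    exact (mul_eq_zero.mp this).resolve_left hβ
  have hmin := minpoly.min ℤ β hhmonic haevalh
  rw [← hp] at hmin
  have hnatle : p.natDegree ≤ h.natDegree := Polynomial.natDegree_le_natDegree hmin
  have hnateq : p.natDegree = 1 + h.natDegree := by
    rw [hph, Polynomial.natDegree_mul Polynomial.X_ne_zero hne, Polynomial.natDegree_X]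
  omega

/-- Every element of the principal congruence subgroup `Γ_n(N)` of `Sp(n,ℤ)` with `N > 2`
is neat: any complex eigenvalue (root of the characteristic polynomial) which is a root of
unity equals `1`.  In particular, if some power `γ^l` is unipotent (all complex eigenvalues
equal to `1`), then `γ` itself is unipotent. -/
theorem statement6 (n N : ℕ) (hN : 2 < N) (γ : Matrix.symplecticGroup (Fin n) ℤ)
    (hcong : ∀ i j, (N : ℤ) ∣
      ((γ : Matrix (Fin n ⊕ Fin n) (Fin n ⊕ Fin n) ℤ) i j -
        (1 : Matrix (Fin n ⊕ Fin n) (Fin n ⊕ Fin n) ℤ) i j)) :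
    (∀ a : ℂ,
        (((γ : Matrix (Fin n ⊕ Fin n) (Fin n ⊕ Fin n) ℤ).map ((↑) : ℤ → ℂ)).charpoly.IsRoot a) →
        (∃ k : ℕ, 0 < k ∧ a ^ k = 1) → a = 1) ∧
      (∀ l : ℕ, 0 < l →
        (∀ a : ℂ,
          ((((γ : Matrix (Fin n ⊕ Fin n) (Fin n ⊕ Fin n) ℤ).map ((↑) : ℤ → ℂ)) ^ l).charpoly.IsRoot a)
            → a = 1) →
        (∀ a : ℂ,
          (((γ : Matrix (Fin n ⊕ Fin n) (Fin n ⊕ Fin n) ℤ).map ((↑) : ℤ → ℂ)).charpoly.IsRoot a)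
            → a = 1)) := by
  set G : Matrix (Fin n ⊕ Fin n) (Fin n ⊕ Fin n) ℤ := (γ : Matrix (Fin n ⊕ Fin n) (Fin n ⊕ Fin n) ℤ)
    with hG
  set Γc : Matrix (Fin n ⊕ Fin n) (Fin n ⊕ Fin n) ℂ := G.map ((↑) : ℤ → ℂ) with hΓc
  have hNne : ((N : ℂ)) ≠ 0 := by
    have h0 : N ≠ 0 := by omega
    exact_mod_cast Nat.cast_ne_zero.mpr h0
  set B : Matrix (Fin n ⊕ Fin n) (Fin n ⊕ Fin n) ℤ :=
    Matrix.of (fun i j => (G i j - (1 : Matrix (Fin n ⊕ Fin n) (Fin n ⊕ Fin n) ℤ) i j) / N)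
    with hB
  have hBent : ∀ i j, (N : ℤ) * B i j =
      G i j - (1 : Matrix (Fin n ⊕ Fin n) (Fin n ⊕ Fin n) ℤ) i j := by
    intro i j
    exact Int.mul_ediv_cancel' (hcong i j)
  -- Part 1: neatness
  have part1 : ∀ a : ℂ, Γc.charpoly.IsRoot a → (∃ k : ℕ, 0 < k ∧ a ^ k = 1) → a = 1 := by
    rintro a hroot ⟨k, hk, hak⟩
    have hdet : (a • (1 : Matrix (Fin n ⊕ Fin n) (Fin n ⊕ Fin n) ℂ) - Γc).det = 0 := by
      rw [← charpoly_eval_eq]; exact hroot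
    set β : ℂ := (a - 1) / N with hβ
    have hNβ : (N : ℂ) * β = a - 1 := by
      rw [hβ]; field_simp
    have hfac : a • (1 : Matrix (Fin n ⊕ Fin n) (Fin n ⊕ Fin n) ℂ) - Γc =
        (N : ℂ) • (β • (1 : Matrix (Fin n ⊕ Fin n) (Fin n ⊕ Fin n) ℂ) - B.map ((↑) : ℤ → ℂ)) := by
      ext i j
      simp only [hΓc, Matrix.sub_apply, Matrix.smul_apply, Matrix.map_apply, smul_eq_mul]
      have h1 : (N : ℂ) * (B i j : ℂ) =
          (G i j : ℂ) - (((1 : Matrix (Fin n ⊕ Fin n) (Fin n ⊕ Fin n) ℤ) i j : ℤ) : ℂ) := by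
        have h2 := congrArg (fun z : ℤ => (z : ℂ)) (hBent i j)
        push_cast at h2
        exact h2
      have hone : (((1 : Matrix (Fin n ⊕ Fin n) (Fin n ⊕ Fin n) ℤ) i j : ℤ) : ℂ) =
          (1 : Matrix (Fin n ⊕ Fin n) (Fin n ⊕ Fin n) ℂ) i j := by
        by_cases h : i = j <;> simp [Matrix.one_apply, h]
      rw [hone] at h1
      linear_combination (-(1 : Matrix (Fin n ⊕ Fin n) (Fin n ⊕ Fin n) ℂ) i j) * hNβ + h1
    rw [hfac, Matrix.det_smul] at hdet
    have hdetB : (β • (1 : Matrix (Fin n ⊕ Fin n) (Fin n ⊕ Fin n) ℂ) - B.map ((↑) : ℤ → ℂ)).det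
        = 0 := by
      have hpow : ((N : ℂ)) ^ (Fintype.card (Fin n ⊕ Fin n)) ≠ 0 := pow_ne_zero _ hNne
      exact (mul_eq_zero.mp hdet).resolve_left hpow
    have hrootB : (B.map ((↑) : ℤ → ℂ)).charpoly.IsRoot β := by
      rw [IsRoot, charpoly_eval_eq]; exact hdetB
    have hint : IsIntegral ℤ β := by
      refine ⟨B.charpoly, B.charpoly_monic, ?_⟩
      rw [← eval_map]
      have hmap := Matrix.charpoly_map B (algebraMap ℤ ℂ)
      rw [← hmap]
      exact hrootB
    have hβ0 : β = 0 := by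
      apply key_neat N k hN hk β hint
      rw [hNβ]
      simpa using hak
    have hsub : a - 1 = 0 := by rw [← hNβ, hβ0, mul_zero]
    exact sub_eq_zero.mp hsub
  refine ⟨part1, ?_⟩
  -- Part 2: power unipotent implies unipotent
  intro l hl hall a hroot
  have hdet : (a • (1 : Matrix (Fin n ⊕ Fin n) (Fin n ⊕ Fin n) ℂ) - Γc).det = 0 := by
    rw [← charpoly_eval_eq]; exact hroot
  obtain ⟨v, hv, hveq⟩ := (Matrix.exists_mulVec_eq_zero_iff).mpr hdet
  have hmul : Γc.mulVec v = a • v := by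
    have h5 : a • v - Γc.mulVec v = 0 := by
      rw [← hveq, Matrix.sub_mulVec, Matrix.smul_mulVec, Matrix.one_mulVec]
    have := sub_eq_zero.mp h5
    exact this.symm
  have hpowvec : ∀ m : ℕ, (Γc ^ m).mulVec v = a ^ m • v := by
    intro m
    induction m with
    | zero => simp [Matrix.one_mulVec]
    | succ m ih =>
      rw [pow_succ, ← Matrix.mulVec_mulVec, hmul, Matrix.mulVec_smul, ih, pow_succ]
      rw [smul_smul, mul_comm]
  have hrootl : (Γc ^ l).charpoly.IsRoot (a ^ l) := by
    rw [IsRoot, charpoly_eval_eq]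
    apply (Matrix.exists_mulVec_eq_zero_iff).mp
    refine ⟨v, hv, ?_⟩
    rw [Matrix.sub_mulVec, Matrix.smul_mulVec, Matrix.one_mulVec, hpowvec l, sub_self]
  have hal : a ^ l = 1 := hall _ hrootl
  exact part1 a hroot ⟨l, hl, hal⟩
end
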